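/- Let 𝔼 = ⟨E, ≤, #⟩ be a prime event structure. The configuration structure C(𝔼) = ⟨E, Conf(𝔼)⟩ whose configurations are the configurations of 𝔼 is stable: it is rooted, connected, closed under bounded unions, closed under intersections, and coherent. (For connectedness, restrict to finite configurations: every nonempty finite configuration x ∈ Conf(𝔼) contains an event a with x \ {a} ∈ Conf(𝔼).) -/

import Mathlib

/-- A configuration structure over `E` is a set `X` of subsets of `E` (its configurations).
    It is rooted when `∅ ∈ X`. -/
def Rooted {E : Type*} (X : Set (Set E)) : Prop := ∅ ∈ X

/-- Connectedness (restricted to finite configurations). -/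
def ConnectedCS {E : Type*} (X : Set (Set E)) : Prop :=
  ∀ x ∈ X, x.Finite → x ≠ ∅ → ∃ a ∈ x, x \ {a} ∈ X

/-- Closure under bounded unions. -/
def ClosedBU {E : Type*} (X : Set (Set E)) : Prop :=
  ∀ x ∈ X, ∀ y ∈ X, ∀ z ∈ X, x ∪ y ⊆ z → x ∪ y ∈ X

/-- Closure under (binary) intersections. -/
def ClosedInter {E : Type*} (X : Set (Set E)) : Prop :=
  ∀ x ∈ X, ∀ y ∈ X, x ∩ y ∈ X

/-- Coherence of a configuration structure. -/
def CoherentCS {E : Type*} (X : Set (Set E)) : Prop :=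
  ∀ x ∈ X, ∀ y ∈ X, ∀ z ∈ X,
    (∃ z' ∈ X, x ∪ y ⊆ z') → (∃ z'' ∈ X, y ∪ z ⊆ z'') → (∃ z''' ∈ X, x ∪ z ⊆ z''') →
    x ∪ y ∪ z ∈ X

/-- Stability of a configuration structure. -/
def StableCS {E : Type*} (X : Set (Set E)) : Prop :=
  Rooted X ∧ ConnectedCS X ∧ ClosedBU X ∧ ClosedInter X ∧ CoherentCS X

/-- The residual `x·C`: configurations `y \ x` for `y ∈ X` with `x ⊆ y`. -/
def res {E : Type*} (x : Set E) (X : Set (Set E)) : Set (Set E) :=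
  {z | ∃ y ∈ X, x ⊆ y ∧ z = y \ x}

/-- The symmetric residual `x⊙C`: configurations `y ∆ x` for `y ∈ X`. -/
def symres {E : Type*} (x : Set E) (X : Set (Set E)) : Set (Set E) :=
  {z | ∃ y ∈ X, z = symmDiff y x}

/-- `s` is the least upper bound of `Y` in the partial order `(X, ⊆)`. -/
def IsLubIn {E : Type*} (X Y : Set (Set E)) (s : Set E) : Prop :=
  s ∈ X ∧ (∀ y ∈ Y, y ⊆ s) ∧ ∀ t ∈ X, (∀ y ∈ Y, y ⊆ t) → s ⊆ t

/-- `Y` is consistent in `(X, ⊆)`: it has a least upper bound in `X`. -/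
def ConsistentIn {E : Type*} (X Y : Set (Set E)) : Prop := ∃ s, IsLubIn X Y s

/-- `Y` is pairwise consistent in `(X, ⊆)`. -/
def PairwiseConsistentIn {E : Type*} (X Y : Set (Set E)) : Prop :=
  Y.Nonempty ∧ ∀ a ∈ Y, ∀ b ∈ Y, a ≠ b → ConsistentIn X {a, b}

/-- `Y` is directed in `(X, ⊆)`: nonempty and its lub exists and belongs to `Y`. -/
def DirectedIn {E : Type*} (X Y : Set (Set E)) : Prop :=
  Y.Nonempty ∧ ∃ s ∈ Y, IsLubIn X Y s

/-- Two configurations are compatible when `{u, v}` has a least upper bound in `(X, ⊆)`. -/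
def Compatible {E : Type*} (X : Set (Set E)) (u v : Set E) : Prop :=
  ConsistentIn X {u, v}

/-- Orthogonality: compatible and inclusion-incomparable. -/
def Orthogonal {E : Type*} (X : Set (Set E)) (u v : Set E) : Prop :=
  Compatible X u v ∧ ¬ u ⊆ v ∧ ¬ v ⊆ u

/-- `x` is a compact element of `(X, ⊆)`. -/
def CompactIn {E : Type*} (X : Set (Set E)) (x : Set E) : Prop :=
  x ∈ X ∧ ∀ Y ⊆ X, DirectedIn X Y → ∀ s, IsLubIn X Y s → x ⊆ s → ∃ y ∈ Y, x ⊆ y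

/-- `p` is a complete prime of `(X, ⊆)`. -/
def CompletePrimeIn {E : Type*} (X : Set (Set E)) (p : Set E) : Prop :=
  p ∈ X ∧ ∀ Y ⊆ X, PairwiseConsistentIn X Y → ∀ s, IsLubIn X Y s → p ⊆ s → ∃ y ∈ Y, p ⊆ y

/-- `y` is an immediate predecessor of `p` in `(X, ⊆)`:
    a maximal element of `{z ∈ X | z ⊊ p}`. -/
def IsMaxPred {E : Type*} (X : Set (Set E)) (p y : Set E) : Prop :=
  y ∈ X ∧ y ⊂ p ∧ ∀ z ∈ X, z ⊂ p → y ⊆ z → z = y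

/-- The complete prime `p` introduces event `a` in `C = ⟨E, X⟩`:
    `p \ pred(p) = {a}` for an immediate predecessor `pred(p)` of `p`
    (i.e. the derivative `δ_C(p)` of `p` is `a`). -/
def IntroducesIn {E : Type*} (X : Set (Set E)) (p : Set E) (a : E) : Prop :=
  CompletePrimeIn X p ∧ ∃ y, IsMaxPred X p y ∧ p \ y = {a}

/-- `p'` is the image of `p` under the residuation map `σ : Pr(C) → Pr(C')`,
    i.e. `p` and `p'` introduce the same event (`δ_{C'}(p') = δ_C(p)`). -/
def SameIntro {E : Type*} (X X' : Set (Set E)) (p p' : Set E) : Prop :=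
  ∃ a, IntroducesIn X p a ∧ IntroducesIn X' p' a

/-- `↓x_C`: the complete primes of `C` included in `x`. -/
def downPr {E : Type*} (X : Set (Set E)) (x : Set E) : Set (Set E) :=
  {p | CompletePrimeIn X p ∧ p ⊆ x}

/-- Causality relation of the switch `↓x_C ⊙ E(C)`. -/
def ltSwitch {E : Type*} (X : Set (Set E)) (x : Set E) (p q : Set E) : Prop :=
  (p ⊆ q ∧ p ∉ downPr X x ∧ q ∉ downPr X x) ∨
  (q ⊆ p ∧ p ∈ downPr X x ∧ q ∈ downPr X x) ∨
  (¬ Compatible X p q ∧ p ∈ downPr X x)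

/-- Conflict relation of the switch `↓x_C ⊙ E(C)`. -/
def cfSwitch {E : Type*} (X : Set (Set E)) (x : Set E) (p q : Set E) : Prop :=
  (¬ Compatible X p q ∧ p ∉ downPr X x ∧ q ∉ downPr X x) ∨
  (p ⊆ q ∧ p ∈ downPr X x ∧ q ∉ downPr X x)

/-- The configurations of a prime event structure (conflict-free,
    downward-closed sets of events) form a stable configuration structure. -/

lemma exists_maximal_rel {E : Type*} (le : E → E → Prop)
    (le_trans : ∀ e f g, le e f → le f g → le e g)
    (le_antisymm : ∀ e f, le e f → le f e → e = f)
    (s : Set E) (hf : s.Finite) (hne : s.Nonempty) :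
    ∃ a ∈ s, ∀ b ∈ s, le a b → b = a := by
  induction s, hf using Set.Finite.induction_on with
  | empty => exact absurd hne (by simp)
  | @insert c t hct htf ih =>
    rcases t.eq_empty_or_nonempty with rfl | htne
    · exact ⟨c, by simp, by simp⟩
    · obtain ⟨a, hat, hmax⟩ := ih htne
      by_cases hac : le a c
      · refine ⟨c, by simp, ?_⟩
        rintro b (rfl | hbt) hcb
        · rfl
        · have hab := le_trans a c b hac hcb
          have hba : b = a := hmax b hbt hab
          have hac' : a = c := le_antisymm a c hac (hba ▸ hcb)
          rw [hba, hac']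
      · refine ⟨a, Set.mem_insert_of_mem _ hat, ?_⟩
        rintro b (rfl | hbt) hab
        · exact absurd hab hac
        · exact hmax b hbt hab

theorem conf_of_pes_is_stable {E : Type*} [Countable E]
    (le : E → E → Prop) (cf : E → E → Prop)
    (le_refl : ∀ e, le e e)
    (le_antisymm : ∀ e f, le e f → le f e → e = f)
    (le_trans : ∀ e f g, le e f → le f g → le e g)
    (cf_irrefl : ∀ e, ¬ cf e e)
    (cf_symm : ∀ e f, cf e f → cf f e)
    (cf_hered : ∀ e e' e'', cf e e' → le e' e'' → cf e e'') :
    StableCS {x : Set E | (∀ a ∈ x, ∀ b ∈ x, ¬ cf a b) ∧ ∀ a ∈ x, ∀ b, le b a → b ∈ x} := by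
  constructor
  · exact ⟨by simp, by simp⟩
  refine ⟨?_, ?_, ?_, ?_⟩
  · -- connected
    rintro x ⟨hcf, hdc⟩ hfin hne
    obtain ⟨a, hax, hmax⟩ := exists_maximal_rel le le_trans le_antisymm x hfin
      (Set.nonempty_iff_ne_empty.2 hne)
    refine ⟨a, hax, ⟨fun p hp q hq => hcf p hp.1 q hq.1, ?_⟩⟩
    rintro p ⟨hpx, hpa⟩ b hbp
    refine ⟨hdc p hpx b hbp, ?_⟩
    rintro rfl
    exact hpa (hmax p hpx hbp)
  · -- bounded unions
    rintro x hx y hy z ⟨hzcf, hzdc⟩ hsub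
    refine ⟨fun a ha b hb => hzcf a (hsub ha) b (hsub hb), ?_⟩
    rintro a (ha | ha) b hb
    · exact Or.inl (hx.2 a ha b hb)
    · exact Or.inr (hy.2 a ha b hb)
  · -- intersections
    rintro x hx y hy
    exact ⟨fun a ha b hb => hx.1 a ha.1 b hb.1,
      fun a ha b hb => ⟨hx.2 a ha.1 b hb, hy.2 a ha.2 b hb⟩⟩
  · -- coherent
    rintro x hx y hy z hz ⟨u, hu, huxy⟩ ⟨v, hv, hvyz⟩ ⟨w, hw, hwxz⟩
    constructor
    · rintro a (ha | ha) b (hb | hb)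
      · rcases ha with ha | ha <;> rcases hb with hb | hb
        · exact hx.1 a ha b hb
        · exact hu.1 a (huxy (Or.inl ha)) b (huxy (Or.inr hb))
        · exact hu.1 a (huxy (Or.inr ha)) b (huxy (Or.inl hb))
        · exact hy.1 a ha b hb
      · rcases ha with ha | ha
        · exact hw.1 a (hwxz (Or.inl ha)) b (hwxz (Or.inr hb))
        · exact hv.1 a (hvyz (Or.inl ha)) b (hvyz (Or.inr hb))
      · rcases hb with hb | hb
        · exact hw.1 a (hwxz (Or.inr ha)) b (hwxz (Or.inl hb))
        · exact hv.1 a (hvyz (Or.inr ha)) b (hvyz (Or.inl hb))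
      · exact hz.1 a ha b hb
    · rintro a (ha | ha) b hb
      · rcases ha with ha | ha
        · exact Or.inl (Or.inl (hx.2 a ha b hb))
        · exact Or.inl (Or.inr (hy.2 a ha b hb))
      · exact Or.inr (hz.2 a ha b hb)
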